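/- Let Φ be a Young function and φ be almost decreasing with φ(r)r^n almost increasing. If ∫_1^∞ Φ⁻¹(φ(t))/t dt < ∞, then for every f in the Orlicz–Campanato space 𝓛^{(Φ,φ)}(ℝⁿ) there exists a constant σ(f) such that for every a ∈ ℝⁿ, the averages f_{B(a,r)} converge to σ(f) as r → ∞. -/

import Mathlib

open MeasureTheory Set Metric Filter NNReal ENNReal Topology

noncomputable section

/-- Generalized inverse in the sense of O'Neil. -/
def ginv (Φ : ℝ≥0∞ → ℝ≥0∞) (u : ℝ≥0∞) : ℝ≥0∞ :=
  if u = ⊤ then ⊤ else sInf {t | u < Φ t}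

/-- A Young function: increasing, convex, vanishing at 0, left continuous,
not identically zero nor identically infinite. -/
structure IsYoung (Φ : ℝ≥0∞ → ℝ≥0∞) : Prop where
  mono : Monotone Φ
  zero : Φ 0 = 0
  top : Φ ⊤ = ⊤
  conv : ∀ (x y : ℝ≥0∞) (a b : ℝ≥0), a + b = 1 →
    Φ ((a : ℝ≥0∞) * x + (b : ℝ≥0∞) * y) ≤ (a : ℝ≥0∞) * Φ x + (b : ℝ≥0∞) * Φ y
  lcont : ∀ t : ℝ≥0∞, t < sInf {s | Φ s = ⊤} →
    Filter.Tendsto Φ (nhdsWithin t (Set.Iio t)) (nhds (Φ t))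
  pos : ∃ t, 0 < t ∧ Φ t ≠ ⊤
  fin : ∃ t, t ≠ ⊤ ∧ Φ t ≠ 0

/-- `θ` is almost decreasing on `(0,∞)`. -/
def AlmostDecreasingOn (θ : ℝ → ℝ) : Prop :=
  ∃ C : ℝ, 0 < C ∧ ∀ r s : ℝ, 0 < r → r < s → θ s ≤ C * θ r

/-- `θ` is almost increasing on `(0,∞)`. -/
def AlmostIncreasingOn (θ : ℝ → ℝ) : Prop :=
  ∃ C : ℝ, 0 < C ∧ ∀ r s : ℝ, 0 < r → r < s → θ r ≤ C * θ s

/-- The class `𝒢^dec`: positive, almost decreasing `φ` with `r ↦ φ(r) rⁿ` almost increasing. -/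
def Gdec (n : ℕ) (φ : ℝ → ℝ) : Prop :=
  (∀ r : ℝ, 0 < r → 0 < φ r) ∧ AlmostDecreasingOn φ ∧
    AlmostIncreasingOn (fun r => φ r * r ^ n)

variable {n : ℕ}

/-- The Orlicz–Morrey "norm" of `f` on the ball `B(a,r)`. -/
def ballNorm (Φ : ℝ≥0∞ → ℝ≥0∞) (φ : ℝ → ℝ)
    (f : EuclideanSpace ℝ (Fin n) → ℝ) (a : EuclideanSpace ℝ (Fin n)) (r : ℝ) : ℝ≥0∞ :=
  sInf {lam : ℝ≥0∞ | 0 < lam ∧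
    (ENNReal.ofReal (φ r))⁻¹ * ((volume (ball a r))⁻¹ *
      ∫⁻ x in ball a r, Φ (ENNReal.ofReal |f x| / lam)) ≤ 1}

/-- The Orlicz–Morrey norm `‖f‖_{L^{(Φ,φ)}}`: supremum over all balls of `ballNorm`. -/
def omNorm (Φ : ℝ≥0∞ → ℝ≥0∞) (φ : ℝ → ℝ) (f : EuclideanSpace ℝ (Fin n) → ℝ) : ℝ≥0∞ :=
  ⨆ (a : EuclideanSpace ℝ (Fin n)) (r : ℝ) (_ : 0 < r), ballNorm Φ φ f a r

/-- The Orlicz–Campanato norm `‖f‖_{𝓛^{(Φ,φ)}} = sup_B ‖f − f_B‖_{Φ,φ,B}`. -/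
def campNorm (Φ : ℝ≥0∞ → ℝ≥0∞) (φ : ℝ → ℝ) (f : EuclideanSpace ℝ (Fin n) → ℝ) : ℝ≥0∞ :=
  ⨆ (a : EuclideanSpace ℝ (Fin n)) (r : ℝ) (_ : 0 < r),
    ballNorm Φ φ (fun x => f x - ⨍ y in ball a r, f y) a r

section Ginv
variable {Φ : ℝ≥0∞ → ℝ≥0∞}

lemma ginv_mono (Φ : ℝ≥0∞ → ℝ≥0∞) : Monotone (ginv Φ) := by
  intro u v huv
  unfold ginv
  split_ifs with h1 h2 h2
  · exact le_rfl
  · exact absurd (top_le_iff.mp (h1 ▸ huv)) h2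
  · exact le_top
  · exact sInf_le_sInf fun t ht => lt_of_le_of_lt huv ht

lemma le_ginv (hmono : Monotone Φ) {s u : ℝ≥0∞} (h : Φ s ≤ u) (hu : u ≠ ⊤) :
    s ≤ ginv Φ u := by
  rw [ginv, if_neg hu]
  by_contra hlt
  push_neg at hlt
  obtain ⟨t, ht, hts⟩ := sInf_lt_iff.mp hlt
  exact absurd (lt_of_lt_of_le ht (le_trans (hmono hts.le) h)) (lt_irrefl u)

lemma young_superhom (hY : IsYoung Φ) {C : ℝ≥0} (hC : 1 ≤ C) (t : ℝ≥0∞) :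
    (C : ℝ≥0∞) * Φ t ≤ Φ ((C : ℝ≥0∞) * t) := by
  have hC0 : C ≠ 0 := fun h => by simp [h] at hC
  have hCinv : C⁻¹ ≤ 1 := by
    rw [← inv_one]
    exact inv_anti₀ zero_lt_one hC
  have h1 : C⁻¹ + (1 - C⁻¹) = 1 := add_tsub_cancel_of_le hCinv
  have := hY.conv ((C : ℝ≥0∞) * t) 0 C⁻¹ (1 - C⁻¹) h1
  rw [mul_zero, add_zero, hY.zero, mul_zero, add_zero, ← mul_assoc,
    ← ENNReal.coe_mul, inv_mul_cancel₀ hC0, ENNReal.coe_one, one_mul] at this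
  calc (C : ℝ≥0∞) * Φ t ≤ (C : ℝ≥0∞) * ((C⁻¹ : ℝ≥0) * Φ ((C : ℝ≥0∞) * t)) :=
        mul_le_mul_right this _
    _ = Φ ((C : ℝ≥0∞) * t) := by
        rw [← mul_assoc, ← ENNReal.coe_mul, mul_inv_cancel₀ hC0, ENNReal.coe_one, one_mul]

lemma ennreal_le_mul_of_forall_lt {x c C : ℝ≥0∞} (hC0 : C ≠ 0) (hCt : C ≠ ⊤)
    (h : ∀ t, c < t → x ≤ C * t) : x ≤ C * c := by
  rcases eq_or_ne c ⊤ with rfl | hc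
  · simp [ENNReal.mul_top hC0]
  · have h2 : ∀ t, c < t → x / C ≤ t := fun t ht => by
      rw [ENNReal.div_le_iff_le_mul (Or.inl hC0) (Or.inl hCt), mul_comm]
      exact h t ht
    have h3 : x / C ≤ c := le_of_forall_gt_imp_ge_of_dense h2
    rw [ENNReal.div_le_iff_le_mul (Or.inl hC0) (Or.inl hCt), mul_comm] at h3
    exact h3

lemma ginv_mul_le (hY : IsYoung Φ) {C : ℝ≥0} (hC : 1 ≤ C) (u : ℝ≥0∞) :
    ginv Φ ((C : ℝ≥0∞) * u) ≤ (C : ℝ≥0∞) * ginv Φ u := by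
  have hC0 : (C : ℝ≥0∞) ≠ 0 := by exact_mod_cast (zero_lt_one.trans_le hC).ne'
  rcases eq_or_ne u ⊤ with rfl | hu
  · rw [ENNReal.mul_top hC0, ginv, if_pos rfl, ENNReal.mul_top hC0]
  · have hCu : (C : ℝ≥0∞) * u ≠ ⊤ := ENNReal.mul_ne_top ENNReal.coe_ne_top hu
    refine ennreal_le_mul_of_forall_lt hC0 ENNReal.coe_ne_top fun t ht => ?_
    rw [ginv, if_neg hu] at ht
    obtain ⟨t', ht', htt⟩ := sInf_lt_iff.mp ht
    have h1 : (C : ℝ≥0∞) * u < Φ ((C : ℝ≥0∞) * t) := by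
      calc (C : ℝ≥0∞) * u < (C : ℝ≥0∞) * Φ t :=
            ENNReal.mul_lt_mul_right hC0 ENNReal.coe_ne_top
              (ht'.trans_le (hY.mono htt.le))
        _ ≤ Φ ((C : ℝ≥0∞) * t) := young_superhom hY hC t
    rw [ginv, if_neg hCu]
    exact sInf_le h1

lemma ginv_lt_top (hY : IsYoung Φ) {u : ℝ≥0∞} (hu : u ≠ ⊤) : ginv Φ u < ⊤ := by
  obtain ⟨t0, ht0top, ht0ne⟩ := hY.fin
  rw [ginv, if_neg hu]
  by_cases h : u < Φ t0
  · exact lt_of_le_of_lt (sInf_le h) ht0top.lt_top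
  · push_neg at h
    obtain ⟨m, hm⟩ := ENNReal.exists_nat_gt (ENNReal.div_lt_top hu ht0ne).ne
    set C : ℝ≥0 := ((m + 1 : ℕ) : ℝ≥0)
    have hC1 : 1 ≤ C := by
      simp only [C]
      exact_mod_cast Nat.succ_le_succ (Nat.zero_le m)
    have h2 : u < (C : ℝ≥0∞) * Φ t0 := by
      have : u / Φ t0 < (C : ℝ≥0∞) := by
        refine hm.trans_le ?_
        exact_mod_cast by exact_mod_cast Nat.cast_le.mpr (Nat.le_succ m)
      rw [ENNReal.div_lt_iff (Or.inl ht0ne) (Or.inl (h.trans_lt hu.lt_top).ne)] at this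
      exact this
    have h3 : u < Φ ((C : ℝ≥0∞) * t0) := h2.trans_le (young_superhom hY hC1 t0)
    exact lt_of_le_of_lt (sInf_le h3) (ENNReal.mul_lt_top ENNReal.coe_lt_top ht0top.lt_top)

end Ginv

lemma helper_inv_mul {c y z : ℝ≥0∞} (hc0 : c ≠ 0) (hct : c ≠ ⊤) (h : c⁻¹ * y ≤ z) :
    y ≤ c * z := by
  have h1 : y / c ≤ z := by rwa [div_eq_mul_inv, mul_comm]
  rw [ENNReal.div_le_iff_le_mul (Or.inl hc0) (Or.inl hct)] at h1
  exact h1.trans_eq (mul_comm _ _)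

section L45
variable {Φ : ℝ≥0∞ → ℝ≥0∞}

lemma young_pointwise (hY : IsYoung Φ) {t : ℝ≥0∞} (ht0 : 0 < t) (htt : t ≠ ⊤)
    (hp0 : Φ t ≠ 0) (hpt : Φ t ≠ ⊤) (v : ℝ≥0∞) : v ≤ t + Φ v * t / Φ t := by
  rcases le_or_gt v t with h | h
  · exact h.trans le_self_add
  · refine le_add_of_nonneg_of_le zero_le ?_
    rcases eq_or_ne v ⊤ with rfl | hv
    · rw [hY.top]
      rw [ENNReal.top_mul ht0.ne', ENNReal.top_div_of_ne_top hpt]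
    · -- v finite, t < v, derive Φ t * v ≤ t * Φ v
      lift v to ℝ≥0 using hv
      lift t to ℝ≥0 using htt
      have hv0 : v ≠ 0 := by
        intro hv0
        rw [hv0] at h
        exact absurd (ENNReal.coe_lt_coe.mp (ht0.trans h)) (by simp)
      have hvt : t ≤ v := by exact_mod_cast h.le
      set a : ℝ≥0 := t / v with ha
      have ha1 : a ≤ 1 := div_le_one_of_le₀ hvt zero_le
      have hab : a + (1 - a) = 1 := add_tsub_cancel_of_le ha1
      have hconv := hY.conv (v : ℝ≥0∞) 0 a (1 - a) hab
      rw [mul_zero, add_zero, hY.zero, mul_zero, add_zero] at hconv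
      have hav : (a : ℝ≥0∞) * (v : ℝ≥0∞) = (t : ℝ≥0∞) := by
        rw [← ENNReal.coe_mul]
        congr 1
        rw [ha, div_mul_cancel₀ _ hv0]
      rw [hav] at hconv
      -- hconv : Φ t ≤ a * Φ v
      have key : Φ (t : ℝ≥0∞) * (v : ℝ≥0∞) ≤ (t : ℝ≥0∞) * Φ (v : ℝ≥0∞) := by
        calc Φ (t : ℝ≥0∞) * (v : ℝ≥0∞) ≤ ((a : ℝ≥0∞) * Φ (v : ℝ≥0∞)) * (v : ℝ≥0∞) :=
              mul_le_mul_left hconv _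
          _ = Φ (v : ℝ≥0∞) * ((a : ℝ≥0∞) * (v : ℝ≥0∞)) := by ring
          _ = (t : ℝ≥0∞) * Φ (v : ℝ≥0∞) := by rw [hav]; ring
      rw [ENNReal.le_div_iff_mul_le (Or.inl hp0) (Or.inl hpt)]
      calc (v : ℝ≥0∞) * Φ (t : ℝ≥0∞) = Φ (t : ℝ≥0∞) * (v : ℝ≥0∞) := mul_comm _ _
        _ ≤ Φ (v : ℝ≥0∞) * (t : ℝ≥0∞) := key.trans_eq (mul_comm _ _)

lemma lintegral_le_ginv (hY : IsYoung Φ) {α : Type*} [MeasurableSpace α] {μ : Measure α}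
    {s : Set α} (hs0 : μ s ≠ 0) (hst : μ s ≠ ⊤) {g : α → ℝ≥0∞}
    (hg : AEMeasurable g (μ.restrict s)) {w : ℝ≥0∞} (hw : w ≠ ⊤)
    (hmod : ∫⁻ x in s, Φ (g x) ∂μ ≤ w * μ s) :
    ∫⁻ x in s, g x ∂μ ≤ 2 * ginv Φ w * μ s := by
  have hΦm : Measurable Φ := hY.mono.measurable
  have hcomp : AEMeasurable (fun x => Φ (g x)) (μ.restrict s) := hΦm.comp_aemeasurable hg
  have key : ∀ t : ℝ≥0∞, ginv Φ w < t → ∫⁻ x in s, g x ∂μ ≤ (2 * μ s) * t := by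
    intro t ht
    have hwt : w < Φ t := by
      rw [ginv, if_neg hw] at ht
      obtain ⟨t', ht', htt⟩ := sInf_lt_iff.mp ht
      exact ht'.trans_le (hY.mono htt.le)
    have ht0 : 0 < t := zero_le.trans_lt ht
    by_cases hΦtop : Φ t = ⊤
    · have hfin : ∀ᵐ x ∂μ.restrict s, Φ (g x) < ⊤ := by
        refine ae_lt_top' hcomp ?_
        exact (hmod.trans_lt (ENNReal.mul_lt_top hw.lt_top hst.lt_top)).ne
      have hae : ∀ᵐ x ∂μ.restrict s, g x ≤ t := by
        filter_upwards [hfin] with x hx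
        by_contra hgt
        push_neg at hgt
        exact absurd (hΦtop ▸ hY.mono hgt.le : (⊤:ℝ≥0∞) ≤ Φ (g x)) (by simp [hx.ne])
      calc ∫⁻ x in s, g x ∂μ ≤ ∫⁻ _ in s, t ∂μ := lintegral_mono_ae hae
        _ = t * μ s := setLIntegral_const s t
        _ ≤ (2 * μ s) * t := by
            rw [mul_comm, mul_assoc]
            exact le_mul_of_one_le_left zero_le one_le_two
    · have hΦ0 : Φ t ≠ 0 := fun h0 => by simp [h0] at hwt
      have hpt : ∀ v : ℝ≥0∞, v ≤ t + Φ v * (t / Φ t) := fun v => by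
        have := young_pointwise hY ht0 (fun htop => hΦtop (htop ▸ hY.top)) hΦ0 hΦtop v
        rwa [mul_div_assoc] at this
      calc ∫⁻ x in s, g x ∂μ ≤ ∫⁻ x in s, (t + Φ (g x) * (t / Φ t)) ∂μ :=
            lintegral_mono fun x => hpt (g x)
        _ = t * μ s + (∫⁻ x in s, Φ (g x) ∂μ) * (t / Φ t) := by
            rw [lintegral_add_left measurable_const, setLIntegral_const,
              lintegral_mul_const'' _ hcomp]
        _ ≤ t * μ s + (w * μ s) * (t / Φ t) := by
            exact add_le_add_right (mul_le_mul_left hmod _) _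
        _ ≤ t * μ s + t * μ s := by
            refine add_le_add_right ?_ _
            calc (w * μ s) * (t / Φ t) = (w * (t / Φ t)) * μ s := by ring
              _ ≤ t * μ s := by
                  refine mul_le_mul_left ?_ _
                  calc w * (t / Φ t) ≤ Φ t * (t / Φ t) := mul_le_mul_left hwt.le _
                    _ ≤ t := ENNReal.mul_div_le
        _ = (2 * μ s) * t := by ring
  have := ennreal_le_mul_of_forall_lt (C := 2 * μ s)
    (by simp [hs0]) (by simp [hst, ENNReal.mul_eq_top]) key
  calc ∫⁻ x in s, g x ∂μ ≤ (2 * μ s) * ginv Φ w := this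
    _ = 2 * ginv Φ w * μ s := by ring

end L45

section Main
variable {n : ℕ} {Φ : ℝ≥0∞ → ℝ≥0∞} {φ : ℝ → ℝ} {f : EuclideanSpace ℝ (Fin n) → ℝ}

lemma key_diff (hY : IsYoung Φ) (hφpos : ∀ r : ℝ, 0 < r → 0 < φ r)
    (hf : LocallyIntegrable f volume) (hfC : campNorm Φ φ f < ⊤) (hn : n ≠ 0)
    {a b : EuclideanSpace ℝ (Fin n)} {r s : ℝ} (hr : 0 < r) (hs : 0 < s)
    (hsub : ball a r ⊆ ball b s) :
    |(⨍ y in ball a r, f y) - ⨍ y in ball b s, f y| ≤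
      (s / r) ^ n * (2 * (campNorm Φ φ f + 1) * ginv Φ (ENNReal.ofReal (φ s))).toReal := by
  haveI : Nonempty (Fin n) := ⟨⟨0, Nat.pos_of_ne_zero hn⟩⟩
  haveI : Nontrivial (EuclideanSpace ℝ (Fin n)) := by
    refine ⟨0, EuclideanSpace.single ⟨0, Nat.pos_of_ne_zero hn⟩ 1, ?_⟩
    intro h
    have := congrArg (fun v : EuclideanSpace ℝ (Fin n) => v ⟨0, Nat.pos_of_ne_zero hn⟩) h
    simp [EuclideanSpace.single_apply] at this
  set M := campNorm Φ φ f with hM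
  set G := ginv Φ (ENNReal.ofReal (φ s)) with hG
  set B : Set (EuclideanSpace ℝ (Fin n)) := ball b s with hB
  set B' : Set (EuclideanSpace ℝ (Fin n)) := ball a r with hB'
  set c := ⨍ y in B, f y with hc
  set w := ENNReal.ofReal (φ s) with hw
  have hw0 : w ≠ 0 := (ENNReal.ofReal_pos.mpr (hφpos s hs)).ne'
  have hwt : w ≠ ⊤ := ENNReal.ofReal_ne_top
  have hGt : G ≠ ⊤ := (ginv_lt_top hY hwt).ne
  have hμB0 : volume B ≠ 0 := (measure_ball_pos volume b hs).ne'
  have hμBt : volume B ≠ ⊤ := measure_ball_lt_top.ne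
  have hμB'0 : volume B' ≠ 0 := (measure_ball_pos volume a hr).ne'
  have hμB't : volume B' ≠ ⊤ := measure_ball_lt_top.ne
  have hIntB : IntegrableOn f B volume :=
    (hf.integrableOn_isCompact (isCompact_closedBall b s)).mono_set ball_subset_closedBall
  have hIntB' : IntegrableOn f B' volume := hIntB.mono_set hsub
  have hgB : IntegrableOn (fun x => f x - c) B volume :=
    hIntB.sub (integrableOn_const measure_ball_lt_top.ne)
  have hgB' : IntegrableOn (fun x => f x - c) B' volume :=
    hIntB'.sub (integrableOn_const measure_ball_lt_top.ne)
  set lam := M + 1 with hlam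
  have hlam0 : lam ≠ 0 := by simp [hlam]
  have hlamt : lam ≠ ⊤ := ENNReal.add_ne_top.mpr ⟨hfC.ne, ENNReal.one_ne_top⟩
  -- modular bound for lam
  have hball_le : ballNorm Φ φ (fun x => f x - c) b s ≤ M := by
    rw [hM, campNorm]
    exact le_iSup_of_le b (le_iSup_of_le s (le_iSup_of_le hs le_rfl))
  have hlt : ballNorm Φ φ (fun x => f x - c) b s < lam :=
    hball_le.trans_lt (ENNReal.lt_add_right hfC.ne one_ne_zero)
  rw [ballNorm] at hlt
  obtain ⟨μ', hμ'S, hμ'lt⟩ := sInf_lt_iff.mp hlt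
  set I := ∫⁻ x in B, Φ (ENNReal.ofReal |f x - c| / lam) with hI
  have hmem : w⁻¹ * ((volume B)⁻¹ * I) ≤ 1 := by
    refine le_trans ?_ hμ'S.2
    refine mul_le_mul_right (mul_le_mul_right ?_ _) _
    exact lintegral_mono fun x => hY.mono (ENNReal.div_le_div le_rfl hμ'lt.le)
  have hImod : I ≤ w * volume B := by
    have h1 := helper_inv_mul hw0 hwt hmem
    have h2 := helper_inv_mul hμB0 hμBt (by
      rw [mul_one] at h1
      exact h1 : (volume B)⁻¹ * I ≤ w)
    exact h2.trans_eq (mul_comm _ _)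
  -- apply the average bound
  have hmf : AEMeasurable f (volume.restrict B) := hIntB.aestronglyMeasurable.aemeasurable
  have hgmeas : AEMeasurable (fun x => ENNReal.ofReal |f x - c| / lam) (volume.restrict B) := by
    exact (ENNReal.measurable_ofReal.comp_aemeasurable
      (continuous_abs.measurable.comp_aemeasurable (hmf.sub aemeasurable_const))).div_const lam
  have hL5 : ∫⁻ x in B, ENNReal.ofReal |f x - c| / lam ≤ 2 * G * volume B :=
    lintegral_le_ginv hY hμB0 hμBt hgmeas hwt hImod
  set J := ∫⁻ x in B, ENNReal.ofReal |f x - c| with hJ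
  have hJle : J ≤ 2 * lam * G * volume B := by
    have hJeq : J = lam * ∫⁻ x in B, ENNReal.ofReal |f x - c| / lam := by
      rw [← lintegral_const_mul' _ _ hlamt]
      refine lintegral_congr fun x => ?_
      rw [ENNReal.mul_div_cancel hlam0 hlamt]
    calc J = lam * ∫⁻ x in B, ENNReal.ofReal |f x - c| / lam := hJeq
      _ ≤ lam * (2 * G * volume B) := mul_le_mul_right hL5 _
      _ = 2 * lam * G * volume B := by ring
  -- real side
  set V := (volume B').toReal with hV
  have hV0 : 0 < V := ENNReal.toReal_pos hμB'0 hμB't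
  have havg : (⨍ y in B', f y) - c = ⨍ y in B', (f y - c) := by
    rw [setAverage_eq, setAverage_eq, integral_sub hIntB'
      (integrableOn_const measure_ball_lt_top.ne), setIntegral_const]
    simp only [smul_eq_mul, measureReal_def, ← hV]
    field_simp
  have habs1 : |⨍ y in B', (f y - c)| ≤ V⁻¹ * ∫ y in B', |f y - c| := by
    rw [setAverage_eq, measureReal_def, smul_eq_mul, abs_mul, abs_of_nonneg (inv_nonneg.2 (le_of_lt hV0))]
    refine mul_le_mul_of_nonneg_left ?_ (inv_nonneg.2 hV0.le)
    have := norm_integral_le_integral_norm (μ := volume.restrict B') (f := fun y => f y - c)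
    simpa [Real.norm_eq_abs] using this
  have habs2 : ∫ y in B', |f y - c| ≤ ∫ y in B, |f y - c| := by
    refine setIntegral_mono_set hgB.abs ?_ hsub.eventuallyLE
    exact Filter.Eventually.of_forall fun y => abs_nonneg _
  have habs3 : ∫ y in B, |f y - c| = J.toReal := by
    have h1 := ofReal_integral_eq_lintegral_ofReal hgB.abs
      (Filter.Eventually.of_forall fun y => abs_nonneg _)
    have h2 : (ENNReal.ofReal (∫ y in B, |f y - c|)).toReal = J.toReal := by rw [h1]
    rwa [ENNReal.toReal_ofReal (integral_nonneg fun y => abs_nonneg _)] at h2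
  have hbound : |(⨍ y in B', f y) - c| ≤ V⁻¹ * (2 * lam * G * volume B).toReal := by
    calc |(⨍ y in B', f y) - c| = |⨍ y in B', (f y - c)| := by rw [havg]
      _ ≤ V⁻¹ * ∫ y in B', |f y - c| := habs1
      _ ≤ V⁻¹ * ∫ y in B, |f y - c| := by
          exact mul_le_mul_of_nonneg_left habs2 (inv_nonneg.2 hV0.le)
      _ = V⁻¹ * J.toReal := by rw [habs3]
      _ ≤ V⁻¹ * (2 * lam * G * volume B).toReal := by
          refine mul_le_mul_of_nonneg_left ?_ (inv_nonneg.2 hV0.le)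
          exact ENNReal.toReal_mono (by
            exact ENNReal.mul_ne_top (ENNReal.mul_ne_top
              (ENNReal.mul_ne_top (by simp) hlamt) hGt) hμBt) hJle
  -- volume algebra
  set D := (volume (ball (0 : EuclideanSpace ℝ (Fin n)) 1)).toReal with hD
  have hD0 : 0 < D := ENNReal.toReal_pos (measure_ball_pos volume _ one_pos).ne'
    measure_ball_lt_top.ne
  have hvolB : (volume B).toReal = s ^ n * D := by
    rw [hB, Measure.addHaar_ball volume b hs.le, ENNReal.toReal_mul,
      ENNReal.toReal_ofReal (pow_nonneg hs.le _), finrank_euclideanSpace_fin]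
  have hvolB' : V = r ^ n * D := by
    rw [hV, hB', Measure.addHaar_ball volume a hr.le, ENNReal.toReal_mul,
      ENNReal.toReal_ofReal (pow_nonneg hr.le _), finrank_euclideanSpace_fin]
  have hfinal : V⁻¹ * (2 * lam * G * volume B).toReal =
      (s / r) ^ n * (2 * lam * G).toReal := by
    rw [ENNReal.toReal_mul, hvolB, hvolB', div_pow]
    field_simp
  rw [hfinal] at hbound
  exact hbound
end Main

section Sum
variable {Φ : ℝ≥0∞ → ℝ≥0∞} {φ : ℝ → ℝ}

lemma tsum_ginv_ne_top (hY : IsYoung Φ) (hφpos : ∀ r : ℝ, 0 < r → 0 < φ r)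
    (hφdec : AlmostDecreasingOn φ)
    (hint : ∫⁻ t in Set.Ioi (1 : ℝ), ginv Φ (ENNReal.ofReal (φ t)) / ENNReal.ofReal t < ⊤) :
    ∑' k : ℕ, ginv Φ (ENNReal.ofReal (φ ((2:ℝ) ^ (k + 1)))) ≠ ⊤ := by
  obtain ⟨C, hC, hCdec⟩ := hφdec
  set C' : ℝ≥0 := ⟨max C 1, le_trans zero_le_one (le_max_right C 1)⟩ with hC'
  have hC'1 : 1 ≤ C' := by
    rw [← NNReal.coe_le_coe]
    exact le_max_right C 1
  have hC'0 : (C' : ℝ≥0∞) ≠ 0 := by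
    exact_mod_cast (zero_lt_one.trans_le hC'1).ne'
  set F : ℝ → ℝ≥0∞ := fun t => ginv Φ (ENNReal.ofReal (φ t)) / ENNReal.ofReal t with hF
  set Gq : ℕ → ℝ≥0∞ := fun k => ginv Φ (ENNReal.ofReal (φ ((2:ℝ) ^ (k + 1)))) with hGq
  have key : ∀ k : ℕ, Gq k / (2 * C') ≤ ∫⁻ t in Set.Ioo ((2:ℝ)^k) ((2:ℝ)^(k+1)), F t := by
    intro k
    set p : ℝ := (2:ℝ)^k with hp
    set q : ℝ := (2:ℝ)^(k+1) with hq
    have hp0 : 0 < p := by positivity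
    have hq0 : 0 < q := by positivity
    have hqp : q = 2 * p := by rw [hp, hq, pow_succ]; ring
    have hop0 : ENNReal.ofReal p ≠ 0 := (ENNReal.ofReal_pos.mpr hp0).ne'
    have hopt : ENNReal.ofReal p ≠ ⊤ := ENNReal.ofReal_ne_top
    have hpt : ∀ t ∈ Set.Ioo p q, Gq k / C' / ENNReal.ofReal q ≤ F t := by
      intro t ht
      have ht0 : 0 < t := hp0.trans ht.1
      have h1 : φ q ≤ (C' : ℝ) * φ t := by
        calc φ q ≤ C * φ t := hCdec t q ht0 ht.2
          _ ≤ (C' : ℝ) * φ t := by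
              exact mul_le_mul_of_nonneg_right (le_max_left C 1) (hφpos t ht0).le
      have h2 : Gq k ≤ (C' : ℝ≥0∞) * ginv Φ (ENNReal.ofReal (φ t)) := by
        calc Gq k ≤ ginv Φ (ENNReal.ofReal ((C' : ℝ) * φ t)) :=
              ginv_mono Φ (ENNReal.ofReal_le_ofReal h1)
          _ = ginv Φ ((C' : ℝ≥0∞) * ENNReal.ofReal (φ t)) := by
              rw [ENNReal.ofReal_mul (C'.coe_nonneg), ENNReal.ofReal_coe_nnreal]
          _ ≤ (C' : ℝ≥0∞) * ginv Φ (ENNReal.ofReal (φ t)) := ginv_mul_le hY hC'1 _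
      have h3 : Gq k / C' ≤ ginv Φ (ENNReal.ofReal (φ t)) := by
        rw [ENNReal.div_le_iff_le_mul (Or.inl hC'0) (Or.inl ENNReal.coe_ne_top)]
        exact h2.trans_eq (mul_comm _ _)
      exact ENNReal.div_le_div h3 (ENNReal.ofReal_le_ofReal ht.2.le)
    have hvol : volume (Set.Ioo p q) = ENNReal.ofReal p := by
      rw [Real.volume_Ioo, hqp]; ring_nf
    have hbb : (ENNReal.ofReal p)⁻¹ * ENNReal.ofReal p = 1 :=
      ENNReal.inv_mul_cancel hop0 hopt
    have halg : Gq k / C' / ENNReal.ofReal q * ENNReal.ofReal p = Gq k / (2 * C') := by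
      rw [hqp, ENNReal.ofReal_mul (by norm_num : (0:ℝ) ≤ 2), ENNReal.ofReal_ofNat]
      calc Gq k / ↑C' / (2 * ENNReal.ofReal p) * ENNReal.ofReal p
          = Gq k * (↑C')⁻¹ * (2⁻¹ * (ENNReal.ofReal p)⁻¹) * ENNReal.ofReal p := by
            rw [div_eq_mul_inv, div_eq_mul_inv,
              ENNReal.mul_inv (Or.inl (by norm_num)) (Or.inl (by norm_num))]
        _ = Gq k * (↑C')⁻¹ * 2⁻¹ * ((ENNReal.ofReal p)⁻¹ * ENNReal.ofReal p) := by ring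
        _ = Gq k * (2 * ↑C')⁻¹ := by
            rw [hbb, mul_one,
              ENNReal.mul_inv (Or.inl (by norm_num)) (Or.inl (by norm_num))]
            ring
        _ = Gq k / (2 * ↑C') := (div_eq_mul_inv _ _).symm
    calc Gq k / (2 * C')
        = Gq k / C' / ENNReal.ofReal q * ENNReal.ofReal p := halg.symm
      _ = ∫⁻ _ in Set.Ioo p q, (Gq k / C' / ENNReal.ofReal q) := by
          rw [setLIntegral_const, hvol]
      _ ≤ ∫⁻ t in Set.Ioo p q, F t := setLIntegral_mono' measurableSet_Ioo hpt
  have hdisj : Pairwise (Function.onFun Disjoint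
      fun k : ℕ => Set.Ioo ((2:ℝ)^k) ((2:ℝ)^(k+1))) := by
    have disj : ∀ i j : ℕ, i < j →
        Disjoint (Set.Ioo ((2:ℝ)^i) ((2:ℝ)^(i+1))) (Set.Ioo ((2:ℝ)^j) ((2:ℝ)^(j+1))) := by
      intro i j h
      have hle : (2:ℝ)^(i+1) ≤ (2:ℝ)^j := pow_le_pow_right₀ one_le_two h
      apply Set.disjoint_left.mpr
      intro x hx1 hx2
      have h1 := hx1.2
      have h2 := hx2.1
      linarith
    intro i j hij
    rcases hij.lt_or_gt with h | h
    · exact disj i j h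
    · exact (disj j i h).symm
  have hmeas : ∀ k : ℕ, MeasurableSet (Set.Ioo ((2:ℝ)^k) ((2:ℝ)^(k+1))) :=
    fun k => measurableSet_Ioo
  have hsum_le : ∑' k : ℕ, Gq k / (2 * C') ≤
      ∫⁻ t in Set.Ioi (1:ℝ), F t := by
    calc ∑' k : ℕ, Gq k / (2 * C')
        ≤ ∑' k : ℕ, ∫⁻ t in Set.Ioo ((2:ℝ)^k) ((2:ℝ)^(k+1)), F t := ENNReal.tsum_le_tsum key
      _ = ∫⁻ t in ⋃ k : ℕ, Set.Ioo ((2:ℝ)^k) ((2:ℝ)^(k+1)), F t :=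
          (lintegral_iUnion hmeas hdisj _).symm
      _ ≤ ∫⁻ t in Set.Ioi (1:ℝ), F t := by
          refine lintegral_mono_set (Set.iUnion_subset fun k => ?_)
          intro x hx
          exact lt_of_le_of_lt (one_le_pow₀ one_le_two) hx.1
  intro htop
  have h2C' : (2 * C' : ℝ≥0∞) ≠ ⊤ := by
    exact ENNReal.mul_ne_top (by norm_num) ENNReal.coe_ne_top
  have : ∑' k : ℕ, Gq k / (2 * C') = ⊤ := by
    simp only [div_eq_mul_inv]
    rw [ENNReal.tsum_mul_right, htop, ENNReal.top_mul]
    exact ENNReal.inv_ne_zero.mpr h2C'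
  rw [this] at hsum_le
  exact absurd (top_le_iff.mp hsum_le) hint.ne

lemma tendsto_ginv_two_pow (hY : IsYoung Φ) (hφpos : ∀ r : ℝ, 0 < r → 0 < φ r)
    (hφdec : AlmostDecreasingOn φ)
    (hint : ∫⁻ t in Set.Ioi (1 : ℝ), ginv Φ (ENNReal.ofReal (φ t)) / ENNReal.ofReal t < ⊤) :
    Filter.Tendsto (fun k : ℕ => (ginv Φ (ENNReal.ofReal (φ ((2:ℝ) ^ k)))).toReal)
      Filter.atTop (nhds 0) := by
  have h1 := (ENNReal.summable_toReal (tsum_ginv_ne_top hY hφpos hφdec hint)).tendsto_atTop_zero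
  exact (Filter.tendsto_add_atTop_iff_nat 1).mp h1

end Sum

/-- if `∫_1^∞ Φ⁻¹(φ(t))/t dt < ∞`, every `f ∈ 𝓛^{(Φ,φ)}(ℝⁿ)` has a
constant `σ(f)` with `f_{B(a,r)} → σ(f)` as `r → ∞`, for every center `a`. -/
theorem stmt12 {n : ℕ} (Φ : ℝ≥0∞ → ℝ≥0∞) (hY : IsYoung Φ) (φ : ℝ → ℝ)
    (hφpos : ∀ r : ℝ, 0 < r → 0 < φ r) (hφdec : AlmostDecreasingOn φ)
    (hφinc : AlmostIncreasingOn (fun r => φ r * r ^ n))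
    (hint : ∫⁻ t in Set.Ioi (1 : ℝ), ginv Φ (ENNReal.ofReal (φ t)) / ENNReal.ofReal t < ⊤)
    (f : EuclideanSpace ℝ (Fin n) → ℝ) (hf : LocallyIntegrable f volume)
    (hfC : campNorm Φ φ f < ⊤) :
    ∃ σ : ℝ, ∀ a : EuclideanSpace ℝ (Fin n),
      Filter.Tendsto (fun r : ℝ => ⨍ y in ball a r, f y) Filter.atTop (nhds σ) := by
  by_cases hn : n = 0
  · subst hn
    haveI : Subsingleton (EuclideanSpace ℝ (Fin 0)) := ⟨fun x y => by ext i; exact Fin.elim0 i⟩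
    refine ⟨⨍ y, f y, fun a => ?_⟩
    have hball : ∀ r : ℝ, 0 < r → ball a r = Set.univ := fun r hr =>
      Set.eq_univ_of_forall fun x => by
        rw [mem_ball, Subsingleton.elim x a, dist_self]
        exact hr
    refine Filter.Tendsto.congr' ?_ tendsto_const_nhds
    filter_upwards [eventually_gt_atTop (0:ℝ)] with r hr
    rw [hball r hr]
    simp [MeasureTheory.setAverage_eq, Measure.restrict_univ]
  · set M := campNorm Φ φ f with hMdef
    set Gf : ℝ → ℝ≥0∞ := fun t => ginv Φ (ENNReal.ofReal (φ t)) with hGf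
    set g : ℕ → ℝ := fun k => ⨍ y in ball (0 : EuclideanSpace ℝ (Fin n)) ((2:ℝ)^k), f y with hg
    have hsummable0 : Summable (fun k : ℕ => (Gf ((2:ℝ)^(k+1))).toReal) :=
      ENNReal.summable_toReal (tsum_ginv_ne_top hY hφpos hφdec hint)
    have hd : ∀ k : ℕ, dist (g k) (g (k+1)) ≤
        (2:ℝ)^n * ((2*(M+1)).toReal * (Gf ((2:ℝ)^(k+1))).toReal) := by
      intro k
      have h2k : (0:ℝ) < (2:ℝ)^k := by positivity
      have h2k1 : (0:ℝ) < (2:ℝ)^(k+1) := by positivity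
      have hsub : ball (0 : EuclideanSpace ℝ (Fin n)) ((2:ℝ)^k) ⊆
          ball (0 : EuclideanSpace ℝ (Fin n)) ((2:ℝ)^(k+1)) :=
        ball_subset_ball (pow_le_pow_right₀ one_le_two (Nat.le_succ k))
      have hkd := key_diff hY hφpos hf hfC hn h2k h2k1 hsub
      have hrat : ((2:ℝ)^(k+1) / (2:ℝ)^k) = 2 := by
        rw [pow_succ]; field_simp
      rw [Real.dist_eq]
      refine le_trans hkd ?_
      rw [hrat, ENNReal.toReal_mul]
    have hsummable : Summable (fun k : ℕ =>
        (2:ℝ)^n * ((2*(M+1)).toReal * (Gf ((2:ℝ)^(k+1))).toReal)) :=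
      (hsummable0.mul_left _).mul_left _
    have hcauchy : CauchySeq g := cauchySeq_of_dist_le_of_summable _ hd hsummable
    obtain ⟨σ, hσ⟩ := cauchySeq_tendsto_of_complete hcauchy
    refine ⟨σ, fun a => ?_⟩
    set K : ℝ → ℕ := fun r => ⌈Real.logb 2 (r + ‖a‖)⌉₊ with hK
    have hKtop : Tendsto K atTop atTop := by
      refine Filter.tendsto_atTop.mpr fun N => ?_
      filter_upwards [eventually_ge_atTop ((2:ℝ)^N)] with r hr
      have hxx : (2:ℝ)^N ≤ r + ‖a‖ := le_trans hr (le_add_of_nonneg_right (norm_nonneg a))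
      have h2 : (N:ℝ) ≤ Real.logb 2 (r + ‖a‖) := by
        have h3 : Real.logb 2 ((2:ℝ)^N) ≤ Real.logb 2 (r + ‖a‖) :=
          Real.logb_le_logb_of_le one_lt_two (by positivity) hxx
        rwa [Real.logb_pow, Real.logb_self_eq_one one_lt_two, mul_one] at h3
      calc N = ⌈(N:ℝ)⌉₊ := (Nat.ceil_natCast N).symm
        _ ≤ K r := Nat.ceil_mono h2
    have hGtend : Tendsto (fun r : ℝ => (Gf ((2:ℝ)^(K r))).toReal) atTop (𝓝 0) :=
      (tendsto_ginv_two_pow hY hφpos hφdec hint).comp hKtop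
    set c : ℝ := (4:ℝ)^n * (2*(M+1)).toReal with hcdef
    have hbound : ∀ᶠ r : ℝ in atTop,
        ‖(⨍ y in ball a r, f y) - g (K r)‖ ≤ c * (Gf ((2:ℝ)^(K r))).toReal := by
      filter_upwards [eventually_ge_atTop (1:ℝ), eventually_ge_atTop ‖a‖] with r hr1 hra
      have hr0 : (0:ℝ) < r := lt_of_lt_of_le one_pos hr1
      have hx0 : (0:ℝ) < r + ‖a‖ := by positivity
      have hx1 : (1:ℝ) ≤ r + ‖a‖ := le_trans hr1 (le_add_of_nonneg_right (norm_nonneg a))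
      have hy0 : 0 ≤ Real.logb 2 (r + ‖a‖) := Real.logb_nonneg one_lt_two hx1
      set s := (2:ℝ)^(K r) with hs
      have hs_ge : r + ‖a‖ ≤ s := by
        have h1 : (2:ℝ)^(Real.logb 2 (r + ‖a‖)) ≤ (2:ℝ)^((K r : ℝ)) :=
          (Real.rpow_le_rpow_left_iff one_lt_two).mpr (Nat.le_ceil _)
        rwa [Real.rpow_logb two_pos (by norm_num) hx0, Real.rpow_natCast] at h1
      have hs_le : s ≤ 4 * r := by
        have h1 : ((K r : ℝ)) ≤ Real.logb 2 (r + ‖a‖) + 1 := le_of_lt (Nat.ceil_lt_add_one hy0)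
        have h2 : (2:ℝ)^((K r:ℝ)) ≤ (2:ℝ)^(Real.logb 2 (r + ‖a‖) + 1) :=
          (Real.rpow_le_rpow_left_iff one_lt_two).mpr h1
        rw [Real.rpow_add two_pos, Real.rpow_one,
          Real.rpow_logb two_pos (by norm_num) hx0, Real.rpow_natCast] at h2
        calc s ≤ (r + ‖a‖) * 2 := h2
          _ ≤ 4 * r := by linarith
      have hs0 : 0 < s := by positivity
      have hsub : ball a r ⊆ ball (0 : EuclideanSpace ℝ (Fin n)) s := by
        intro x hx
        rw [mem_ball] at hx ⊢
        calc dist x 0 ≤ dist x a + dist a 0 := dist_triangle _ _ _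
          _ < r + ‖a‖ := by
              rw [dist_zero_right a]
              exact add_lt_add_of_lt_of_le hx le_rfl
          _ ≤ s := hs_ge
      have hkd := key_diff hY hφpos hf hfC hn hr0 hs0 hsub
      rw [Real.norm_eq_abs]
      have hgK : g (K r) = ⨍ y in ball (0 : EuclideanSpace ℝ (Fin n)) s, f y := rfl
      rw [hgK]
      refine le_trans hkd ?_
      have hratio : (s/r)^n ≤ (4:ℝ)^n :=
        pow_le_pow_left₀ (by positivity) ((div_le_iff₀ hr0).mpr (by linarith)) n
      rw [ENNReal.toReal_mul]
      calc (s/r)^n * ((2*(M+1)).toReal * (Gf s).toReal)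
          ≤ (4:ℝ)^n * ((2*(M+1)).toReal * (Gf s).toReal) :=
            mul_le_mul_of_nonneg_right hratio (by positivity)
        _ = c * (Gf s).toReal := by rw [hcdef]; ring
    have h1 : Tendsto (fun r : ℝ => (⨍ y in ball a r, f y) - g (K r)) atTop (𝓝 0) := by
      refine squeeze_zero_norm' hbound ?_
      have h2 := hGtend.const_mul c
      simpa using h2
    have h2 : Tendsto (fun r : ℝ => g (K r)) atTop (𝓝 σ) := hσ.comp hKtop
    have h3 := h1.add h2
    rw [zero_add] at h3
    refine h3.congr fun r => ?_
    ring
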